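/- Let a ∈ (0,1), b > 0, k > 0. If x ≥ 0 satisfies x ≤ k·x^a + b, then x ≤ k^(1/(1-a)) + b/(1-a). -/

import Mathlib

theorem stmt0 (a b k x : ℝ) (ha : a ∈ Set.Ioo (0:ℝ) 1) (hb : 0 < b) (hk : 0 < k)
    (hx : 0 ≤ x) (hineq : x ≤ k * x ^ a + b) :
    x ≤ k ^ (1 / (1 - a)) + b / (1 - a) := by
  obtain ⟨ha0, ha1⟩ := ha
  have h1a : (0:ℝ) < 1 - a := by linarith
  set y : ℝ := k ^ (1 / (1 - a)) with hy
  have hy0 : 0 < y := Real.rpow_pos_of_pos hk _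
  have hkya : k * y ^ a = y := by
    rw [hy, ← Real.rpow_mul hk.le, ← Real.rpow_one_add' hk.le (by positivity)]
    congr 1
    field_simp
    ring
  -- Bernoulli: (x/y)^a ≤ 1 + a*(x/y - 1)
  have hbern : (x / y) ^ a ≤ 1 + a * (x / y - 1) := by
    have := rpow_one_add_le_one_add_mul_self (s := x / y - 1) (p := a)
      (by have : 0 ≤ x / y := div_nonneg hx hy0.le; linarith) ha0.le ha1.le
    simpa using this
  have hkey : k * x ^ a ≤ y + a * (x - y) := by
    have hxy : x ^ a = y ^ a * (x / y) ^ a := by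
      rw [← Real.mul_rpow hy0.le (div_nonneg hx hy0.le)]
      rw [mul_div_cancel₀ _ (ne_of_gt hy0)]
    calc k * x ^ a = k * y ^ a * (x / y) ^ a := by rw [hxy]; ring
      _ ≤ k * y ^ a * (1 + a * (x / y - 1)) := by
          apply mul_le_mul_of_nonneg_left hbern
          positivity
      _ = y * (1 + a * (x / y - 1)) := by rw [hkya]
      _ = y + a * (x - y) := by field_simp
  have : (1 - a) * x ≤ (1 - a) * y + b := by nlinarith
  have : x - y ≤ b / (1 - a) := by
    rw [le_div_iff₀ h1a]; nlinarith
  linarith
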